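/- A left regulated function H : I → ℝ is locally Riemann integrable (Riemann integrable on each compact subinterval of I) if and only if H is locally bounded. -/

import Mathlib

open Set Filter Topology MeasureTheory


/-- A "left-separated" set of reals is countable. -/
lemma leftSep_countable {s : Set ℝ} (h : ∀ t ∈ s, ∃ u < t, Ioo u t ∩ s = ∅) :
    s.Countable := by
  choose! u hu hs using h
  choose! q hq1 hq2 using fun t (ht : t ∈ s) => exists_rat_btwn (hu t ht)
  have key : ∀ t ∈ s, ∀ t' ∈ s, t < t' → (q t : ℝ) < q t' := by
    intro t ht t' ht' htt'
    have : t ∉ Ioo (u t') t' := fun hmem => by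
      have : t ∈ Ioo (u t') t' ∩ s := ⟨hmem, ht⟩
      rw [hs t' ht'] at this
      exact this
    have hle : t ≤ u t' := by
      rcases lt_or_ge (u t') t with h1 | h1
      · exact absurd ⟨h1, htt'⟩ this
      · exact h1
    calc (q t : ℝ) < t := hq2 t ht
      _ ≤ u t' := hle
      _ < q t' := hq1 t' ht'
  have hinj : Set.InjOn q s := by
    intro t ht t' ht' hqe
    by_contra hne
    rcases lt_or_gt_of_ne hne with h1 | h1
    · exact absurd (congrArg (Rat.cast (K := ℝ)) hqe) (ne_of_lt (key t ht t' ht' h1))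
    · exact absurd (congrArg (Rat.cast (K := ℝ)) hqe).symm (ne_of_lt (key t' ht' t ht h1))
  exact Set.countable_of_injective_of_countable_image hinj ((Set.countable_univ (α := ℚ)).mono (Set.subset_univ _))

lemma discont_countable {H : ℝ → ℝ} {a b : ℝ}
    (hlim : ∀ t ∈ Ioc a b, ∃ L, Tendsto H (𝓝[Ioo a t] t) (𝓝 L)) :
    {t ∈ Ioo a b | ¬ContinuousAt H t}.Countable := by
  set D : ℕ → Set ℝ := fun n =>
    {t ∈ Ioo a b | ∀ δ > (0:ℝ), ∃ x, |x - t| < δ ∧ 1/(n+1 : ℝ) ≤ |H x - H t|} with hD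
  have hsub : {t ∈ Ioo a b | ¬ContinuousAt H t} ⊆ ⋃ n, D n := by
    intro t ⟨htab, hdc⟩
    rw [Metric.continuousAt_iff] at hdc
    push_neg at hdc
    obtain ⟨ε, hε, hεd⟩ := hdc
    obtain ⟨n, hn⟩ := exists_nat_one_div_lt hε
    refine mem_iUnion.2 ⟨n, htab, fun δ hδ => ?_⟩
    obtain ⟨x, hx1, hx2⟩ := hεd δ hδ
    exact ⟨x, by rwa [Real.dist_eq] at hx1,
      le_trans (le_of_lt hn) (by rwa [Real.dist_eq] at hx2)⟩
  refine Set.Countable.mono hsub (Set.countable_iUnion fun n => ?_)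
  apply leftSep_countable
  intro t htD
  obtain ⟨htab, _⟩ := htD
  obtain ⟨L, hL⟩ := hlim t ⟨htab.1, htab.2.le⟩
  set ε : ℝ := 1/(4*(n+1) : ℝ) with hε
  have hεpos : 0 < ε := by positivity
  rw [Metric.tendsto_nhdsWithin_nhds] at hL
  obtain ⟨δ, hδpos, hδ⟩ := hL ε hεpos
  refine ⟨max a (t - δ), max_lt htab.1 (by linarith), ?_⟩
  ext s; simp only [mem_inter_iff, mem_empty_iff_false, iff_false]
  rintro ⟨hsu, hsab, hsD⟩
  obtain ⟨hsu1, hsu2⟩ := hsu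
  have h1 : a < s := lt_of_le_of_lt (le_max_left _ _) hsu1
  have h2 : t - δ < s := lt_of_le_of_lt (le_max_right _ _) hsu1
  obtain ⟨x, hx1, hx2⟩ := hsD (min (s - max a (t - δ)) (t - s)) (by
    apply lt_min <;> linarith)
  have hxu : max a (t - δ) < x := by
    have := abs_lt.1 hx1
    have := min_le_left (s - max a (t - δ)) (t - s)
    linarith [this, (abs_lt.1 hx1).1]
  have hxt : x < t := by
    have := (abs_lt.1 hx1).2
    have := min_le_right (s - max a (t - δ)) (t - s)
    linarith
  have hmem : ∀ y : ℝ, max a (t - δ) < y → y < t → |H y - L| < ε := by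
    intro y hy1 hy2
    have hya : a < y := lt_of_le_of_lt (le_max_left _ _) hy1
    have hyd : dist y t < δ := by
      rw [Real.dist_eq, abs_of_neg (by linarith)]
      have := le_max_right a (t - δ); linarith
    have := hδ (x := y) ⟨hya, hy2⟩ hyd
    rwa [Real.dist_eq] at this
  have hHx := hmem x hxu hxt
  have hHs := hmem s hsu1 hsu2
  have : |H x - H s| < 2 * ε := by
    have := abs_sub_lt_iff.1 hHx
    have := abs_sub_lt_iff.1 hHs
    rw [abs_sub_lt_iff]; constructor <;> linarith [(abs_sub_lt_iff.1 hHx).1,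
      (abs_sub_lt_iff.1 hHx).2, (abs_sub_lt_iff.1 hHs).1, (abs_sub_lt_iff.1 hHs).2]
  have hcontra : 1/(n+1 : ℝ) ≤ 2 * ε := le_trans hx2 this.le
  rw [hε] at hcontra
  have h0 : (0:ℝ) < n + 1 := by positivity
  have : 2 * (1 / (4 * ((n:ℝ) + 1))) = (1/2) * (1 / ((n:ℝ)+1)) := by field_simp; ring
  rw [this] at hcontra
  have hpos : 0 < 1 / ((n:ℝ)+1) := by positivity
  linarith

lemma box_Icc_eq_closure {ι : Type*} [Fintype ι] (J : BoxIntegral.Box ι) :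
    BoxIntegral.Box.Icc J = closure (J : Set (ι → ℝ)) := by
  rw [BoxIntegral.Box.coe_eq_pi, closure_pi_set, BoxIntegral.Box.Icc_eq_pi]
  exact Set.pi_congr rfl fun i _ => (closure_Ioc (J.lower_lt_upper i).ne).symm

lemma bounded_dir {a b : ℝ} (h : a < b) {H : ℝ → ℝ}
    (hInt : BoxIntegral.Integrable
      (BoxIntegral.Box.mk (fun _ : Fin 1 => a) (fun _ => b) (fun _ => h))
      BoxIntegral.IntegrationParams.Riemann (fun x => H (x 0))
      ((volume : Measure (Fin 1 → ℝ)).toBoxAdditive.toSMul)) :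
    ∃ M, ∀ t ∈ Icc a b, |H t| ≤ M := by
  by_contra hub
  push_neg at hub
  set B : BoxIntegral.Box (Fin 1) :=
    BoxIntegral.Box.mk (fun _ : Fin 1 => a) (fun _ => b) (fun _ => h) with hB
  set f : (Fin 1 → ℝ) → ℝ := fun x => H (x 0) with hf
  set r := BoxIntegral.Integrable.convergenceR (E := ℝ) (F := ℝ) hInt 1 0 with hr
  have hrc : ∀ x, r x = r 0 := hInt.convergenceR_cond 1 0 rfl
  set r0 : ℝ := (r 0 : ℝ) with hr0
  have hr0pos : 0 < r0 := (r 0).2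
  set r' : (Fin 1 → ℝ) → Ioi (0 : ℝ) := fun _ => ⟨r0/2, by simp [hr0pos, half_pos]⟩ with hr'
  obtain ⟨π, hpart, hhen, hsub, -, -⟩ :=
    BoxIntegral.Box.exists_taggedPartition_isHenstock_isSubordinate_homothetic B r'
  -- f is unbounded on the Icc of some box of π
  have hcover : BoxIntegral.Box.Icc B ⊆ ⋃ J ∈ π.boxes, BoxIntegral.Box.Icc J := by
    rw [box_Icc_eq_closure]
    have hU : (B : Set (Fin 1 → ℝ)) = π.iUnion :=
      (π.isPartition_iff_iUnion_eq.1 hpart).symm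
    rw [hU, BoxIntegral.TaggedPrepartition.iUnion_def]
    refine (closure_minimal ?_ ?_)
    · exact Set.iUnion₂_mono fun J _ => (BoxIntegral.Box.coe_subset_Icc).trans
        (by exact subset_rfl)
    · exact (π.boxes.finite_toSet.isClosed_biUnion fun J _ =>
        (box_Icc_eq_closure J ▸ isClosed_closure))
  have hJbig : ∃ J ∈ π.boxes, ∀ M, ∃ x ∈ BoxIntegral.Box.Icc J, M < |f x| := by
    by_contra hno
    push_neg at hno
    choose! MJ hMJ using hno
    set Mtot : ℝ := ∑ J ∈ π.boxes, |MJ J| with hMtot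
    obtain ⟨t, htab, htM⟩ := hub Mtot
    have hxt : (fun _ : Fin 1 => t) ∈ BoxIntegral.Box.Icc B := by
      rw [BoxIntegral.Box.Icc_def]
      exact ⟨fun _ => htab.1, fun _ => htab.2⟩
    obtain ⟨J, hJm, hxJ⟩ := Set.mem_iUnion₂.1 (hcover hxt)
    have : |f (fun _ : Fin 1 => t)| ≤ Mtot := by
      calc |f (fun _ : Fin 1 => t)| ≤ MJ J := hMJ J hJm _ hxJ
        _ ≤ |MJ J| := le_abs_self _
        _ ≤ Mtot := Finset.single_le_sum (fun K _ => abs_nonneg (MJ K)) hJm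
    simp only [hf] at this
    exact absurd htM (not_lt.2 this)
  obtain ⟨J, hJm, hJub⟩ := hJbig
  set vJ : ℝ := (volume : Measure (Fin 1 → ℝ)).toBoxAdditive J with hvJ
  have hvJpos : 0 < vJ := by
    rw [hvJ, BoxIntegral.Box.volume_apply]
    exact Finset.prod_pos fun i _ => sub_pos.2 (J.lower_lt_upper i)
  obtain ⟨x, hxIcc, hxbig⟩ := hJub (|f (π.tag J)| + 3/vJ)
  classical
  -- retagged prepartition
  set tagf : BoxIntegral.Box (Fin 1) → (Fin 1 → ℝ) :=
    fun K => if K = J then x else π.tag K with htagf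
  have htagJ : tagf J = x := if_pos rfl
  have htagne : ∀ K, K ≠ J → tagf K = π.tag K := fun K hK => if_neg hK
  set π' : BoxIntegral.TaggedPrepartition B :=
    ⟨π.toPrepartition, tagf, by
      intro K
      by_cases hKJ : K = J
      · rw [hKJ, htagJ]
        exact BoxIntegral.Box.le_iff_Icc.1 (π.toPrepartition.le_of_mem hJm) hxIcc
      · rw [htagne K hKJ]
        exact π.tag_mem_Icc K⟩ with hπ'
  have htag' : ∀ K, π'.tag K = tagf K := fun _ => rfl
  have hmem : BoxIntegral.IntegrationParams.Riemann.MemBaseSet B 0 r π := by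
    refine ⟨fun K hK => ?_, fun _ => hhen, fun hd => absurd hd (by decide), fun hd => absurd hd (by decide)⟩
    refine (hsub K hK).trans (Metric.closedBall_subset_closedBall ?_)
    rw [hrc (π.tag K)]
    simp only [hr']
    linarith [hr0pos]
  have hmem' : BoxIntegral.IntegrationParams.Riemann.MemBaseSet B 0 r π' := by
    refine ⟨fun K hK => ?_, fun _ K hK => ?_, fun hd => absurd hd (by decide), fun hd => absurd hd (by decide)⟩
    · by_cases hKJ : K = J
      · subst hKJ
        rw [htag' K, htagJ, hrc x]
        intro y hy
        have h1 := hsub K hK hy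
        have h2 := hsub K hK hxIcc
        rw [Metric.mem_closedBall] at h1 h2 ⊢
        calc dist y x ≤ dist y (π.tag K) + dist (π.tag K) x := dist_triangle _ _ _
          _ ≤ r0/2 + r0/2 := add_le_add h1 (dist_comm x (π.tag K) ▸ h2)
          _ = r0 := by ring
      · rw [htag' K, htagne K hKJ, hrc (π.tag K)]
        refine (hsub K hK).trans (Metric.closedBall_subset_closedBall ?_)
        simp only [hr']
        linarith [hr0pos]
    · by_cases hKJ : K = J
      · subst hKJ
        rw [htag' K, htagJ]; exact hxIcc
      · rw [htag' K, htagne K hKJ]; exact hhen K hK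
  have hpart' : π'.IsPartition := hpart
  have hd1 := hInt.dist_integralSum_integral_le_of_memBaseSet one_pos hmem hpart
  have hd2 := hInt.dist_integralSum_integral_le_of_memBaseSet one_pos hmem' hpart'
  have hdist : dist (BoxIntegral.integralSum f ((volume : Measure (Fin 1 → ℝ)).toBoxAdditive.toSMul) π)
      (BoxIntegral.integralSum f ((volume : Measure (Fin 1 → ℝ)).toBoxAdditive.toSMul) π') ≤ 1 + 1 :=
    (dist_triangle
      (BoxIntegral.integralSum f ((volume : Measure (Fin 1 → ℝ)).toBoxAdditive.toSMul) π)
      (BoxIntegral.integral B BoxIntegral.IntegrationParams.Riemann f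
        ((volume : Measure (Fin 1 → ℝ)).toBoxAdditive.toSMul))
      (BoxIntegral.integralSum f ((volume : Measure (Fin 1 → ℝ)).toBoxAdditive.toSMul) π')).trans
      (add_le_add hd1 (by rw [dist_comm]; exact hd2))
  -- compute the distance
  have hsum : BoxIntegral.integralSum f ((volume : Measure (Fin 1 → ℝ)).toBoxAdditive.toSMul) π -
      BoxIntegral.integralSum f ((volume : Measure (Fin 1 → ℝ)).toBoxAdditive.toSMul) π'
      = vJ • f (π.tag J) - vJ • f x := by
    rw [BoxIntegral.integralSum, BoxIntegral.integralSum, ← Finset.sum_sub_distrib]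
    rw [Finset.sum_eq_single_of_mem J hJm]
    · rw [htag' J, htagJ]
      rfl
    · intro K hK hKJ
      rw [htag' K, htagne K hKJ, sub_self]
  have habs : (3:ℝ) ≤ |vJ • f (π.tag J) - vJ • f x| := by
    rw [smul_eq_mul, smul_eq_mul, ← mul_sub, abs_mul, abs_of_pos hvJpos]
    have h1 : 3/vJ ≤ |f (π.tag J) - f x| := by
      have := abs_sub_abs_le_abs_sub (f x) (f (π.tag J))
      have h2 : 3/vJ < |f x| - |f (π.tag J)| := by linarith
      calc 3/vJ ≤ |f x - f (π.tag J)| := le_trans h2.le (le_trans (sub_le_iff_le_add.2 (by linarith [abs_sub_abs_le_abs_sub (f x) (f (π.tag J))])) le_rfl)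
        _ = |f (π.tag J) - f x| := abs_sub_comm _ _
    calc (3:ℝ) = vJ * (3/vJ) := by field_simp
      _ ≤ vJ * |f (π.tag J) - f x| := by
          exact mul_le_mul_of_nonneg_left h1 hvJpos.le
  rw [Real.dist_eq, hsum] at hdist
  linarith

lemma integrable_dir {I : Set ℝ} (hI : I.OrdConnected) {H : ℝ → ℝ}
    (hreg : ∀ t ∈ I, (∃ s ∈ I, s < t) → ∃ L, Tendsto H (𝓝[I ∩ Iio t] t) (𝓝 L))
    {a b : ℝ} (ha : a ∈ I) (hb : b ∈ I) (h : a < b)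
    {M : ℝ} (hM : ∀ t ∈ Icc a b, |H t| ≤ M) :
    BoxIntegral.Integrable (BoxIntegral.Box.mk (fun _ : Fin 1 => a) (fun _ => b) (fun _ => h))
      BoxIntegral.IntegrationParams.Riemann (fun x => H (x 0))
      ((volume : Measure (Fin 1 → ℝ)).toBoxAdditive.toSMul) := by
  set B : BoxIntegral.Box (Fin 1) :=
    BoxIntegral.Box.mk (fun _ : Fin 1 => a) (fun _ => b) (fun _ => h) with hB
  set g : ℝ → ℝ := fun t => H (max a (min b t)) with hg
  have hIcc : Icc a b ⊆ I := hI.out ha hb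
  have hlim : ∀ t ∈ Ioc a b, ∃ L, Tendsto H (𝓝[Ioo a t] t) (𝓝 L) := by
    intro t ht
    obtain ⟨L, hL⟩ := hreg t (hIcc ⟨ht.1.le, ht.2⟩) ⟨a, ha, ht.1⟩
    exact ⟨L, hL.mono_left (nhdsWithin_mono _
      (fun x hx => ⟨hIcc ⟨hx.1.le, hx.2.le.trans ht.2⟩, hx.2⟩))⟩
  have hD := discont_countable hlim
  set N : Set ℝ := {a, b} ∪ {t ∈ Ioo a b | ¬ContinuousAt H t} with hN
  have hNc : N.Countable := ((Set.countable_singleton b).insert a).union hD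
  have hNnull : volume N = 0 := hNc.measure_zero _
  have hgc : ∀ t ∉ N, ContinuousAt g t := by
    intro t htN
    have hta : t ≠ a := fun he => htN (Or.inl (Or.inl he))
    have htb : t ≠ b := fun he => htN (Or.inl (Or.inr he))
    rcases lt_trichotomy t a with h1 | h1 | h1
    · -- g = H a near t
      apply (continuousAt_const (y := H a)).congr
      filter_upwards [Iio_mem_nhds h1] with s hs
      simp only [mem_Iio] at hs
      have h3 : min b s = s := min_eq_right (le_of_lt (hs.trans h))
      simp only [hg, h3, max_eq_left (le_of_lt hs)]
    · exact (hta h1).elim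
    · rcases lt_trichotomy t b with h2 | h2 | h2
      · -- t ∈ Ioo a b
        have hct : ContinuousAt H t := by
          by_contra hc
          exact htN (Or.inr ⟨⟨h1, h2⟩, hc⟩)
        apply hct.congr
        filter_upwards [Ioo_mem_nhds h1 h2] with s hs
        simp only [hg, min_eq_right hs.2.le, max_eq_right hs.1.le]
      · exact (htb h2).elim
      · apply (continuousAt_const (y := H b)).congr
        filter_upwards [Ioi_mem_nhds h2] with s hs
        simp only [mem_Ioi] at hs
        simp only [hg, min_eq_left hs.le, max_eq_right h.le]
  -- a.e. continuity of F
  have hnull' : volume ((fun x : Fin 1 → ℝ => x 0) ⁻¹' N) = 0 := by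
    have := (volume_preserving_funUnique (Fin 1) ℝ).measure_preimage
      (MeasureTheory.NullMeasurableSet.of_null hNnull)
    simp [MeasurableEquiv.funUnique, hNnull] at this
    exact this
  have hae : ∀ᵐ x : (Fin 1 → ℝ), ContinuousAt (fun x : Fin 1 → ℝ => g (x 0)) x := by
    rw [ae_iff]
    refine measure_mono_null (fun x hx => ?_) hnull'
    simp only [mem_setOf_eq] at hx
    by_contra hxN
    exact hx (ContinuousAt.comp (g := g) (f := fun p : Fin 1 → ℝ => p 0) (x := x)
      (hgc (x 0) hxN) (continuous_apply 0).continuousAt)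
  have hbound : ∃ C, ∀ x ∈ BoxIntegral.Box.Icc B, ‖g (x 0)‖ ≤ C := by
    refine ⟨M, fun x hx => ?_⟩
    rw [BoxIntegral.Box.Icc_def] at hx
    have h0 : x 0 ∈ Icc a b := ⟨hx.1 0, hx.2 0⟩
    have : max a (min b (x 0)) ∈ Icc a b :=
      ⟨le_max_left _ _, max_le h.le (min_le_left _ _)⟩
    simpa [Real.norm_eq_abs] using hM _ this
  have hInt := MeasureTheory.AEContinuous.hasBoxIntegral (f := fun x : Fin 1 → ℝ => g (x 0))
    volume hbound hae BoxIntegral.IntegrationParams.Riemann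
  refine ⟨∫ (x : Fin 1 → ℝ) in ↑B, g (x 0) ∂volume, ?_⟩
  have key : BoxIntegral.integralSum (I := B) (fun x : Fin 1 → ℝ => H (x 0))
      ((volume : Measure (Fin 1 → ℝ)).toBoxAdditive.toSMul)
      = BoxIntegral.integralSum (fun x : Fin 1 → ℝ => g (x 0))
      ((volume : Measure (Fin 1 → ℝ)).toBoxAdditive.toSMul) := by
    funext π
    refine Finset.sum_congr rfl fun J hJ => ?_
    have hmem := π.tag_mem_Icc J
    rw [BoxIntegral.Box.Icc_def] at hmem
    have h0 : π.tag J 0 ∈ Icc a b := ⟨hmem.1 0, hmem.2 0⟩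
    congr 1
    simp only [hg, min_eq_right h0.2, max_eq_right h0.1]
  unfold BoxIntegral.HasIntegral
  rw [key]
  exact hInt

/-- A left regulated function `H : I → ℝ` is locally Riemann integrable (Riemann
integrable, in the sense of the Riemann integration parameters of the box integral,
on each compact subinterval of `I`) if and only if it is locally bounded (bounded on
each compact subinterval of `I`). -/
theorem leftRegulated_locallyRiemannIntegrable_iff_locallyBounded
    (I : Set ℝ) (hI : I.OrdConnected) (H : ℝ → ℝ)
    (hreg : ∀ t ∈ I, (∃ s ∈ I, s < t) →
      ∃ L : ℝ, Tendsto H (𝓝[I ∩ Iio t] t) (𝓝 L)) :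
    (∀ a b : ℝ, a ∈ I → b ∈ I → ∀ h : a < b,
      BoxIntegral.Integrable
        (BoxIntegral.Box.mk (fun _ : Fin 1 => a) (fun _ => b) (fun _ => h))
        BoxIntegral.IntegrationParams.Riemann (fun x => H (x 0))
        ((volume : Measure (Fin 1 → ℝ)).toBoxAdditive.toSMul))
    ↔ (∀ a b : ℝ, a ∈ I → b ∈ I → ∃ M : ℝ, ∀ t ∈ Icc a b, |H t| ≤ M) := by
  constructor
  · intro hInt a b ha hb
    rcases lt_trichotomy a b with hlt | heq | hgt
    · exact bounded_dir hlt (hInt a b ha hb hlt)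
    · subst heq
      refine ⟨|H a|, fun t ht => ?_⟩
      rw [Icc_self, mem_singleton_iff] at ht
      rw [ht]
    · exact ⟨0, fun t ht => absurd (ht.1.trans ht.2) (not_le.2 hgt)⟩
  · intro hbd a b ha hb hab
    obtain ⟨M, hM⟩ := hbd a b ha hb
    exact integrable_dir hI hreg ha hb hab hM
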